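/- Let B be an n×n real constant row-sum matrix whose characteristic polynomial (over ℂ) has roots λ₁, λ₂, …, λ_n counted with multiplicity, where Be = λ₁e and the remaining roots are ordered so that |λ₂| ≤ |λ₃| ≤ ⋯ ≤ |λ_n|. Then for every p ∈ ℕ ∪ {∞} with p ≥ 1, lim_{k→∞} (τ_p(B^k))^{1/k} = |λ_n|. -/

import Mathlib

open Matrix
open scoped ENNReal

/-- Non-increasing (descending) sort of a list of reals. -/
noncomputable def sortDesc (l : List ℝ) : List ℝ := (l.insertionSort (· ≤ ·)).reverse

/-- Given the descending rearrangement `l` of `n` numbers, the sum of the largest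
(about) half minus the sum of the smallest (about) half, skipping the middle
element when `n` is odd. -/
noncomputable def halfSumDiff (n : ℕ) (l : List ℝ) : ℝ :=
  if n % 2 = 1 then (l.take ((n - 1) / 2)).sum - (l.drop ((n + 1) / 2)).sum
  else (l.take (n / 2)).sum - (l.drop (n / 2)).sum

/-- Radius of the `i`-th Gershgorin disc of the second type of `M`, computed from
the `i`-th row of `M` with the diagonal entry replaced by `0`. -/
noncomputable def secondTypeRadius {n : ℕ} (M : Matrix (Fin n) (Fin n) ℝ) (i : Fin n) : ℝ :=
  halfSumDiff n (sortDesc (List.ofFn fun j : Fin n => if j = i then 0 else M i j))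

/-- The `i`-th Gershgorin disc of the second type of `M`. -/
noncomputable def secondTypeDisc {n : ℕ} (M : Matrix (Fin n) (Fin n) ℝ) (i : Fin n) : Set ℂ :=
  Metric.closedBall ((M i i : ℝ) : ℂ) (secondTypeRadius M i)

/-- The Gershgorin region of the second type of `M`. -/
noncomputable def secondTypeRegion {n : ℕ} (M : Matrix (Fin n) (Fin n) ℝ) : Set ℂ :=
  ⋃ i : Fin n, secondTypeDisc M i

/-- `μ` is a (complex) eigenvalue of the real matrix `A`, i.e. a complex root of
its characteristic polynomial. -/
def IsEigenvalueC {n : ℕ} (A : Matrix (Fin n) (Fin n) ℝ) (μ : ℂ) : Prop :=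
  ((A.map ((↑) : ℝ → ℂ)).charpoly).IsRoot μ

/-- The `k`-th largest element (1-indexed) among the `n - 1` off-diagonal entries of
column `j` of `B`. -/
noncomputable def kthLargestOffDiag {n : ℕ} (B : Matrix (Fin n) (Fin n) ℝ) (j : Fin n)
    (k : ℕ) : ℝ :=
  (sortDesc (((List.ofFn fun i : Fin n => B i j).eraseIdx j.val))).getD (k - 1) 0

/-- The ℓ_p norm of a vector in ℝ^n. -/
noncomputable def lpNorm {n : ℕ} (p : ℝ≥0∞) (x : Fin n → ℝ) : ℝ :=
  @norm (PiLp p fun _ : Fin n => ℝ) _ ((WithLp.equiv p (∀ _ : Fin n, ℝ)).symm x)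

/-- The seminorm-like quantity `τ_p(B)`: the supremum of `‖Bᵀ x‖_p` over all real
vectors `x` with `xᵀ e = 0` and `‖x‖_p = 1`. -/
noncomputable def tau {n : ℕ} (p : ℝ≥0∞) (B : Matrix (Fin n) (Fin n) ℝ) : ℝ :=
  sSup { t : ℝ | ∃ x : Fin n → ℝ, (∑ i, x i) = 0 ∧ lpNorm p x = 1 ∧ t = lpNorm p (Bᵀ *ᵥ x) }

/-- The Ostrowski–Brauer set `Γ(M)` of a real square matrix `M`. -/
noncomputable def brauerSet {n : ℕ} (M : Matrix (Fin n) (Fin n) ℝ) : Set ℂ :=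
  ⋃ (i : Fin n) (j : Fin n) (_ : i < j),
    { y : ℂ | ‖y - (M i i : ℝ)‖ * ‖y - (M j j : ℝ)‖ ≤
        (∑ k ∈ Finset.univ.filter fun k => k ≠ i, |M i k|) *
        (∑ k ∈ Finset.univ.filter fun k => k ≠ j, |M j k|) }

/-- `cs_j(A)` from Definition 2.3: sorted column sums difference. -/
noncomputable def csCol {n : ℕ} (A : Matrix (Fin n) (Fin n) ℝ) (j : Fin n) : ℝ :=
  halfSumDiff n (sortDesc (List.ofFn fun i : Fin n => A i j))


open Polynomial Filter
open scoped Topology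

lemma aux_eval_charpoly {n : ℕ} {K : Type*} [CommRing K] (M : Matrix (Fin n) (Fin n) K)
    (t : K) : M.charpoly.eval t = (t • (1 : Matrix (Fin n) (Fin n) K) - M).det := by
  rw [Matrix.charpoly, ← Polynomial.coe_evalRingHom, RingHom.map_det]
  congr 1
  ext i j
  by_cases h : i = j <;>
    simp [h, charmatrix_apply, Matrix.smul_apply, Matrix.one_apply, Matrix.diagonal_apply]

lemma aux_mem_spectrum_iff {n : ℕ} {K : Type*} [Field K] (M : Matrix (Fin n) (Fin n) K)
    (μ : K) : μ ∈ spectrum K M ↔ M.charpoly.IsRoot μ := by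
  rw [spectrum.mem_iff, Polynomial.IsRoot, aux_eval_charpoly,
    Algebra.algebraMap_eq_smul_one, Matrix.isUnit_iff_isUnit_det, isUnit_iff_ne_zero, not_not]

section lp
variable {n : ℕ} {p : ℝ≥0∞}

lemma aux_lp_smul (hp : 1 ≤ p) (c : ℝ) (x : Fin n → ℝ) :
    lpNorm p (c • x) = |c| * lpNorm p x := by
  haveI : Fact (1 ≤ p) := ⟨hp⟩
  unfold lpNorm
  rw [show (WithLp.equiv p (Fin n → ℝ)).symm (c • x) = c • (WithLp.equiv p (Fin n → ℝ)).symm x from rfl, norm_smul, Real.norm_eq_abs]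

lemma aux_lp_nonneg (hp : 1 ≤ p) (x : Fin n → ℝ) : 0 ≤ lpNorm p x := by
  haveI : Fact (1 ≤ p) := ⟨hp⟩
  exact norm_nonneg _

lemma aux_lp_coord (hp : 1 ≤ p) (hp' : p = ⊤ ∨ ∃ m : ℕ, p = m) (x : Fin n → ℝ) (i : Fin n) :
    |x i| ≤ lpNorm p x := by
  rcases hp' with rfl | ⟨m, rfl⟩
  · unfold lpNorm
    rw [PiLp.norm_eq_ciSup]
    have := le_ciSup (f := fun j => ‖((WithLp.equiv ⊤ (∀ _ : Fin n, ℝ)).symm x) j‖)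
      (Set.Finite.bddAbove (Set.finite_range _)) i
    simpa using this
  · have hm : m ≠ 0 := by rintro rfl; simp at hp
    set r := ((m:ℝ≥0∞)).toReal with hr
    have hrm : r = (m:ℝ) := by simp [hr]
    have ht : (0:ℝ) < r := by rw [hrm]; exact_mod_cast Nat.pos_of_ne_zero hm
    unfold lpNorm
    rw [PiLp.norm_eq_sum ht]
    have h2 : |x i| ^ r ≤ ∑ j, ‖((WithLp.equiv ((m:ℝ≥0∞)) (∀ _ : Fin n, ℝ)).symm x) j‖ ^ r := by
      refine Finset.single_le_sum (f := fun j => ‖x j‖ ^ r) (fun j _ => ?_) (Finset.mem_univ i)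
      positivity
    calc |x i| = (|x i| ^ r) ^ (1/r) := by
          rw [one_div, Real.rpow_rpow_inv (abs_nonneg _) (ne_of_gt ht)]
      _ ≤ _ := by
          apply Real.rpow_le_rpow (by positivity) h2 (by positivity)

lemma aux_lp_le_sum (hp : 1 ≤ p) (hp' : p = ⊤ ∨ ∃ m : ℕ, p = m) (hn : 0 < n) (x : Fin n → ℝ) :
    lpNorm p x ≤ ∑ i, |x i| := by
  have hS : ∀ j, |x j| ≤ ∑ i, |x i| := fun j =>
    Finset.single_le_sum (fun i _ => abs_nonneg (x i)) (Finset.mem_univ j)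
  have hS0 : 0 ≤ ∑ i, |x i| := Finset.sum_nonneg fun i _ => abs_nonneg _
  rcases hp' with rfl | ⟨m, rfl⟩
  · unfold lpNorm
    rw [PiLp.norm_eq_ciSup]
    haveI : Nonempty (Fin n) := ⟨⟨0, hn⟩⟩
    exact ciSup_le fun i => by simpa [Real.norm_eq_abs] using hS i
  · have hm : m ≠ 0 := by rintro rfl; simp at hp
    have hm1 : 1 ≤ m := Nat.one_le_iff_ne_zero.mpr hm
    set r := ((m:ℝ≥0∞)).toReal with hr
    have hrm : r = (m:ℝ) := by simp [hr]
    have ht : (0:ℝ) < r := by rw [hrm]; exact_mod_cast Nat.pos_of_ne_zero hm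
    have hr1 : (1:ℝ) ≤ r := by rw [hrm]; exact_mod_cast hm1
    unfold lpNorm
    rw [PiLp.norm_eq_sum ht]
    set S := ∑ i, |x i| with hSdef
    have key : ∑ j, ‖((WithLp.equiv ((m:ℝ≥0∞)) (∀ _ : Fin n, ℝ)).symm x) j‖ ^ r ≤ S ^ r := by
      have h1 : ∀ j, ‖x j‖ ^ r ≤ |x j| * S ^ (r - 1) := by
        intro j
        rcases eq_or_lt_of_le (abs_nonneg (x j)) with h0 | h0
        · rw [Real.norm_eq_abs, ← h0, Real.zero_rpow (ne_of_gt ht)]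
          positivity
        · have : ‖x j‖ ^ r = |x j| ^ (1:ℝ) * |x j| ^ (r - 1) := by
            rw [Real.norm_eq_abs, ← Real.rpow_add h0]; ring_nf
          rw [this, Real.rpow_one]
          have := Real.rpow_le_rpow (abs_nonneg (x j)) (hS j) (by linarith : (0:ℝ) ≤ r - 1)
          exact mul_le_mul_of_nonneg_left this (abs_nonneg _)
      calc ∑ j, ‖((WithLp.equiv ((m:ℝ≥0∞)) (∀ _ : Fin n, ℝ)).symm x) j‖ ^ r
          ≤ ∑ j, |x j| * S ^ (r - 1) := Finset.sum_le_sum fun j _ => h1 j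
        _ = S * S ^ (r - 1) := by rw [← Finset.sum_mul]
        _ ≤ S ^ r := by
            rcases eq_or_lt_of_le hS0 with h0 | h0
            · rw [← h0, zero_mul]
              positivity
            · have hmul : S * S ^ (r - 1) = S ^ r := by
                nth_rewrite 1 [← Real.rpow_one S]
                rw [← Real.rpow_add h0]
                ring_nf
              exact le_of_eq hmul
    calc (∑ j, ‖((WithLp.equiv ((m:ℝ≥0∞)) (∀ _ : Fin n, ℝ)).symm x) j‖ ^ r) ^ (1/r)
        ≤ (S ^ r) ^ (1/r) := Real.rpow_le_rpow (by positivity) key (by positivity)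
      _ = S := by rw [one_div, Real.rpow_rpow_inv hS0 (ne_of_gt ht)]
end lp

section mats
variable {n : ℕ}

noncomputable def auxJ (n : ℕ) : Matrix (Fin n) (Fin n) ℝ := Matrix.of fun _ _ => (1:ℝ)
noncomputable def auxP (n : ℕ) : Matrix (Fin n) (Fin n) ℝ := 1 - (n:ℝ)⁻¹ • auxJ n

lemma auxJ_mul_auxJ : auxJ n * auxJ n = (n:ℝ) • auxJ n := by
  ext i j; simp [auxJ, Matrix.mul_apply]

lemma auxP_mul_auxJ (hn : 0 < n) : auxP n * auxJ n = 0 := by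
  have hne : (n:ℝ) ≠ 0 := Nat.cast_ne_zero.mpr hn.ne'
  rw [auxP, Matrix.sub_mul, Matrix.smul_mul, auxJ_mul_auxJ, Matrix.one_mul,
    smul_smul, inv_mul_cancel₀ hne, one_smul, sub_self]

lemma auxJ_vecMul (hn : 0 < n) : (1 : Fin n → ℝ) ᵥ* auxP n = 0 := by
  funext j
  simp [auxP, vecMul, dotProduct, auxJ, Matrix.one_apply, Finset.sum_sub_distrib]
  field_simp
  norm_num

variable {B : Matrix (Fin n) (Fin n) ℝ} {lam1 : ℝ}

lemma aux_rowsum (hB : B *ᵥ (1 : Fin n → ℝ) = lam1 • 1) (k : ℕ) :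
    B ^ k *ᵥ (1 : Fin n → ℝ) = (lam1 ^ k) • 1 := by
  induction k with
  | zero => simp
  | succ k ih =>
    rw [pow_succ', ← Matrix.mulVec_mulVec, ih, Matrix.mulVec_smul, hB, smul_smul, ← pow_succ]

lemma aux_mul_J (hB : B *ᵥ (1 : Fin n → ℝ) = lam1 • 1) (k : ℕ) :
    B ^ k * auxJ n = (lam1 ^ k) • auxJ n := by
  have h := aux_rowsum hB k
  ext i j
  have := congrFun h i
  simp only [Matrix.mulVec, dotProduct, Pi.one_apply, mul_one, Pi.smul_apply, smul_eq_mul] at this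
  simp [auxJ, Matrix.mul_apply, this]

lemma auxD_pow (hB : B *ᵥ (1 : Fin n → ℝ) = lam1 • 1) (hn : 0 < n) {k : ℕ} (hk : 1 ≤ k) :
    (auxP n * B) ^ k = auxP n * B ^ k := by
  induction k with
  | zero => omega
  | succ k ih =>
    rcases Nat.eq_or_lt_of_le hk with h1 | h1
    · simp [← h1]
    · have hk' : 1 ≤ k := by omega
      have hBP : B ^ k * auxP n = B ^ k - ((n:ℝ)⁻¹ * lam1 ^ k) • auxJ n := by
        rw [auxP, Matrix.mul_sub, Matrix.mul_one, Matrix.mul_smul, aux_mul_J hB, smul_smul]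
      calc (auxP n * B) ^ (k+1) = (auxP n * B ^ k) * (auxP n * B) := by rw [pow_succ, ih hk']
        _ = auxP n * ((B ^ k * auxP n) * B) := by
            rw [Matrix.mul_assoc, Matrix.mul_assoc]
        _ = auxP n * ((B ^ k - ((n:ℝ)⁻¹ * lam1 ^ k) • auxJ n) * B) := by rw [hBP]
        _ = auxP n * (B ^ k * B) - ((n:ℝ)⁻¹ * lam1 ^ k) • (auxP n * (auxJ n * B)) := by
            rw [Matrix.sub_mul, Matrix.mul_sub, Matrix.smul_mul, Matrix.mul_smul]
        _ = auxP n * B ^ (k+1) := by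
            rw [← Matrix.mul_assoc (auxP n) (auxJ n) B, auxP_mul_auxJ hn, Matrix.zero_mul,
              smul_zero, sub_zero, pow_succ]
end mats

section mats2
variable {n : ℕ} {B : Matrix (Fin n) (Fin n) ℝ} {lam1 : ℝ}

lemma auxD_vecMul_one (hB : B *ᵥ (1 : Fin n → ℝ) = lam1 • 1) (hn : 0 < n) {k : ℕ} (hk : 1 ≤ k) :
    (1 : Fin n → ℝ) ᵥ* ((auxP n * B) ^ k) = 0 := by
  rw [auxD_pow hB hn hk, ← Matrix.vecMul_vecMul, auxJ_vecMul hn, Matrix.zero_vecMul]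

lemma auxP_transpose : (auxP n)ᵀ = auxP n := by
  ext i j
  by_cases h : i = j
  · simp [auxP, auxJ, Matrix.one_apply, h]
  · simp [auxP, auxJ, Matrix.one_apply, h, Ne.symm h]

lemma auxP_mulVec {x : Fin n → ℝ} (hx : ∑ i, x i = 0) : auxP n *ᵥ x = x := by
  funext i
  have hPa : ∀ j, auxP n i j = (1 : Matrix (Fin n) (Fin n) ℝ) i j - (n:ℝ)⁻¹ := by
    intro j; simp [auxP, auxJ]
  simp only [Matrix.mulVec, dotProduct, hPa, sub_mul, Finset.sum_sub_distrib,
    ← Finset.mul_sum, hx, mul_zero, sub_zero]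
  simp [Matrix.one_apply]

lemma auxD_transpose_mulVec (hB : B *ᵥ (1 : Fin n → ℝ) = lam1 • 1) (hn : 0 < n) {k : ℕ}
    (hk : 1 ≤ k) {x : Fin n → ℝ} (hx : ∑ i, x i = 0) :
    (((auxP n * B) ^ k)ᵀ) *ᵥ x = ((B ^ k)ᵀ) *ᵥ x := by
  rw [auxD_pow hB hn hk, Matrix.transpose_mul, ← Matrix.mulVec_mulVec, auxP_transpose,
    auxP_mulVec hx]
end mats2

section dets
variable {n : ℕ} {B : Matrix (Fin n) (Fin n) ℝ} {lam1 : ℝ}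

lemma aux_det_identity (hn : 0 < n) (hB : B *ᵥ (1 : Fin n → ℝ) = lam1 • 1) (t : ℝ)
    (ht : (t • (1 : Matrix (Fin n) (Fin n) ℝ) - B).det ≠ 0) :
    (t - lam1) * (t • (1 : Matrix (Fin n) (Fin n) ℝ) - auxP n * B).det
      = t * (t • (1 : Matrix (Fin n) (Fin n) ℝ) - B).det := by
  set A := t • (1 : Matrix (Fin n) (Fin n) ℝ) - B with hAdef
  have hA : IsUnit A.det := isUnit_iff_ne_zero.mpr ht
  set u : Fin n → ℝ := fun _ => (n:ℝ)⁻¹ with hu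
  set v : Fin n → ℝ := fun j => ∑ l, B l j with hv
  have key : t • (1 : Matrix (Fin n) (Fin n) ℝ) - auxP n * B
      = A + Matrix.replicateCol (Fin 1) u * Matrix.replicateRow (Fin 1) v := by
    ext i j
    have hPB : (auxP n * B) i j = B i j - (n:ℝ)⁻¹ * ∑ l, B l j := by
      rw [Matrix.mul_apply]
      have hP : ∀ l, auxP n i l = (1 : Matrix (Fin n) (Fin n) ℝ) i l - (n:ℝ)⁻¹ := by
        intro l; simp [auxP, auxJ]
      simp only [hP, sub_mul, Finset.sum_sub_distrib, ← Finset.mul_sum]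
      congr 1
      simp [Matrix.one_apply]
    simp only [Matrix.sub_apply, Matrix.add_apply, hPB]
    have hcr : (Matrix.replicateCol (Fin 1) u * Matrix.replicateRow (Fin 1) v) i j = (n:ℝ)⁻¹ * ∑ l, B l j := by
      rw [Matrix.mul_apply]
      simp [Matrix.replicateCol, Matrix.replicateRow, hu, hv]
    rw [hcr, hAdef]
    simp only [Matrix.sub_apply, Matrix.smul_apply, smul_eq_mul]
    ring
  -- A *ᵥ 1 = (t - lam1) • 1
  have hAe : A *ᵥ (1 : Fin n → ℝ) = (t - lam1) • 1 := by
    rw [hAdef, Matrix.sub_mulVec, hB, Matrix.smul_mulVec, Matrix.one_mulVec, sub_smul]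
  have htl : t - lam1 ≠ 0 := by
    intro h0
    have h1 : A⁻¹ *ᵥ (A *ᵥ (1 : Fin n → ℝ)) = 1 := by
      rw [Matrix.mulVec_mulVec, Matrix.nonsing_inv_mul A hA, Matrix.one_mulVec]
    rw [hAe, h0, zero_smul, Matrix.mulVec_zero] at h1
    have := congrFun h1 ⟨0, hn⟩
    simp at this
  have hInv : A⁻¹ *ᵥ (1 : Fin n → ℝ) = (t - lam1)⁻¹ • 1 := by
    have h1 : A⁻¹ *ᵥ (A *ᵥ (1 : Fin n → ℝ)) = 1 := by
      rw [Matrix.mulVec_mulVec, Matrix.nonsing_inv_mul A hA, Matrix.one_mulVec]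
    rw [hAe, Matrix.mulVec_smul] at h1
    have h2 : (t - lam1)⁻¹ • ((t - lam1) • (A⁻¹ *ᵥ (1 : Fin n → ℝ)))
        = (t - lam1)⁻¹ • (1 : Fin n → ℝ) := by rw [h1]
    rwa [smul_smul, inv_mul_cancel₀ htl, one_smul] at h2
  have hsum : ∑ j, v j = (n:ℝ) * lam1 := by
    rw [hv]
    rw [Finset.sum_comm]
    have : ∀ l, ∑ j, B l j = lam1 := by
      intro l
      have := congrFun hB l
      simpa [Matrix.mulVec, dotProduct] using this
    simp [this]
  have hAu : A⁻¹ *ᵥ u = ((n:ℝ)⁻¹ * (t - lam1)⁻¹) • 1 := by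
    have : u = (n:ℝ)⁻¹ • (1 : Fin n → ℝ) := by funext i; simp [hu]
    rw [this, Matrix.mulVec_smul, hInv, smul_smul]
  have hdot : v ⬝ᵥ (A⁻¹ *ᵥ u) = lam1 * (t - lam1)⁻¹ := by
    rw [hAu]
    have hne : (n:ℝ) ≠ 0 := Nat.cast_ne_zero.mpr hn.ne'
    simp only [dotProduct, Pi.smul_apply, Pi.one_apply, smul_eq_mul, mul_one]
    rw [← Finset.sum_mul, hsum]
    field_simp
  have key2 : t • (1 : Matrix (Fin n) (Fin n) ℝ) - auxP n * B
      = A * (1 + Matrix.replicateCol (Fin 1) (A⁻¹ *ᵥ u) * Matrix.replicateRow (Fin 1) v) := by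
    rw [key, Matrix.mul_add, Matrix.mul_one, ← Matrix.mul_assoc, ← Matrix.replicateCol_mulVec,
      Matrix.mulVec_mulVec, Matrix.mul_nonsing_inv A hA, Matrix.one_mulVec]
  rw [key2, Matrix.det_mul]
  erw [Matrix.det_one_add_replicateCol_mul_replicateRow (ι := Fin 1)]
  rw [hdot]
  field_simp
  ring

lemma aux_charpoly_identity (hn : 0 < n) (hB : B *ᵥ (1 : Fin n → ℝ) = lam1 • 1) :
    (Polynomial.X - Polynomial.C lam1) * (auxP n * B).charpoly
      = Polynomial.X * B.charpoly := by
  apply Polynomial.eq_of_infinite_eval_eq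
  have hfin : {t : ℝ | (t • (1 : Matrix (Fin n) (Fin n) ℝ) - B).det = 0}.Finite := by
    have : {t : ℝ | (t • (1 : Matrix (Fin n) (Fin n) ℝ) - B).det = 0}
        = {t : ℝ | B.charpoly.IsRoot t} := by
      ext t; simp [Polynomial.IsRoot, aux_eval_charpoly]
    rw [this]
    exact Polynomial.finite_setOf_isRoot B.charpoly_monic.ne_zero
  apply Set.Infinite.mono (s := {t : ℝ | (t • (1 : Matrix (Fin n) (Fin n) ℝ) - B).det = 0}ᶜ)
  · intro t ht
    simp only [Set.mem_compl_iff, Set.mem_setOf_eq] at ht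
    simp only [Set.mem_setOf_eq, Polynomial.eval_mul, Polynomial.eval_sub, Polynomial.eval_X,
      Polynomial.eval_C, aux_eval_charpoly]
    exact aux_det_identity hn hB t ht
  · exact Set.Finite.infinite_compl hfin
end dets

section cx

lemma aux_roots_D {n : ℕ} (hn : 2 ≤ n) (B : Matrix (Fin n) (Fin n) ℝ)
    (lam : Fin n → ℂ)
    (hroots : ((B.map ((↑) : ℝ → ℂ)).charpoly).roots = Finset.univ.val.map lam)
    (lam1 : ℝ) (hB : B *ᵥ (1 : Fin n → ℝ) = lam1 • (1 : Fin n → ℝ))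
    (hlam1 : lam ⟨0, by linarith⟩ = (lam1 : ℂ)) :
    (((auxP n * B).map ((↑) : ℝ → ℂ)).charpoly).roots
      = 0 ::ₘ ((Finset.univ.val.erase (⟨0, by linarith⟩ : Fin n)).map lam) := by
  have hnpos : 0 < n := by omega
  have hid := congrArg (Polynomial.map (Complex.ofRealHom)) (aux_charpoly_identity hnpos hB)
  rw [Polynomial.map_mul, Polynomial.map_mul, Polynomial.map_sub, Polynomial.map_X,
    Polynomial.map_C, ← Matrix.charpoly_map, ← Matrix.charpoly_map] at hid
  have hmapEq : ∀ (M : Matrix (Fin n) (Fin n) ℝ),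
      M.map (Complex.ofRealHom : ℝ →+* ℂ) = M.map ((↑) : ℝ → ℂ) := fun _ => rfl
  rw [hmapEq, hmapEq] at hid
  simp only [Complex.ofRealHom_eq_coe] at hid
  have hD0 : ((auxP n * B).map ((↑) : ℝ → ℂ)).charpoly ≠ 0 :=
    (Matrix.charpoly_monic _).ne_zero
  have hB0 : ((B.map ((↑) : ℝ → ℂ)).charpoly) ≠ 0 := (Matrix.charpoly_monic _).ne_zero
  have hXC : (Polynomial.X - Polynomial.C ((lam1 : ℂ))) ≠ 0 := Polynomial.X_sub_C_ne_zero _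
  have hroots2 := congrArg Polynomial.roots hid
  rw [Polynomial.roots_mul (mul_ne_zero hXC hD0),
    Polynomial.roots_mul (mul_ne_zero Polynomial.X_ne_zero hB0),
    Polynomial.roots_X_sub_C, Polynomial.roots_X, hroots] at hroots2
  have i0 : Fin n := ⟨0, by omega⟩
  have hmem : (⟨0, by omega⟩ : Fin n) ∈ Finset.univ.val := Finset.mem_univ_val _
  have hsplit : Finset.univ.val.map lam
      = lam ⟨0, by omega⟩ ::ₘ ((Finset.univ.val.erase (⟨0, by omega⟩ : Fin n)).map lam) := by
    rw [← Multiset.map_cons, Multiset.cons_erase hmem]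
  rw [hsplit, hlam1] at hroots2
  have hcons : (lam1 : ℂ) ::ₘ (((auxP n * B).map ((↑) : ℝ → ℂ)).charpoly).roots
      = (lam1 : ℂ) ::ₘ (0 ::ₘ ((Finset.univ.val.erase (⟨0, by omega⟩ : Fin n)).map lam)) := by
    simpa [Multiset.singleton_add, Multiset.cons_swap] using hroots2
  exact (Multiset.cons_inj_right _).mp hcons
end cx

section gel
attribute [local instance] Matrix.linftyOpNormedRing Matrix.linftyOpNormedAlgebra

lemma aux_gelfand {n : ℕ} (hn : 2 ≤ n) (B : Matrix (Fin n) (Fin n) ℝ)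
    (lam : Fin n → ℂ)
    (hroots : ((B.map ((↑) : ℝ → ℂ)).charpoly).roots = Finset.univ.val.map lam)
    (lam1 : ℝ) (hB : B *ᵥ (1 : Fin n → ℝ) = lam1 • (1 : Fin n → ℝ))
    (hlam1 : lam ⟨0, by linarith⟩ = (lam1 : ℂ))
    (hmono : ∀ i j : Fin n, 0 < i.val → i ≤ j →
      ‖lam i‖ ≤ ‖lam j‖) :
    Filter.Tendsto (fun k : ℕ => ‖((auxP n * B).map ((↑) : ℝ → ℂ)) ^ k‖ ^ ((1:ℝ)/k))
      Filter.atTop (nhds (‖lam ⟨n - 1, Nat.sub_lt (by linarith) Nat.one_pos⟩‖)) := by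
  set Dc := (auxP n * B).map ((↑) : ℝ → ℂ) with hDc
  set lamTop := lam ⟨n - 1, by omega⟩ with hlt
  have hD0 : Dc.charpoly ≠ 0 := (Matrix.charpoly_monic _).ne_zero
  have hrootsD := aux_roots_D hn B lam hroots lam1 hB hlam1
  have hnodup : (Finset.univ.val : Multiset (Fin n)).Nodup := Finset.univ.nodup
  have hrad : spectralRadius ℂ Dc = (‖lamTop‖₊ : ℝ≥0∞) := by
    rw [spectralRadius]
    apply le_antisymm
    · refine iSup₂_le fun μ hμ => ?_
      have hroot := (aux_mem_spectrum_iff Dc μ).mp hμ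
      have hμr : μ ∈ Dc.charpoly.roots := (Polynomial.mem_roots hD0).mpr hroot
      rw [hrootsD] at hμr
      rcases Multiset.mem_cons.mp hμr with h0 | hrest
      · subst h0; simp
      · obtain ⟨i, hi, rfl⟩ := Multiset.mem_map.mp hrest
        have hine : i ≠ (⟨0, by omega⟩ : Fin n) := ((hnodup.mem_erase_iff).mp hi).1
        have hipos : 0 < i.val := by
          rcases Nat.eq_zero_or_pos i.val with h | h
          · exact absurd (Fin.ext h) hine
          · exact h
        have hile : i ≤ (⟨n - 1, by omega⟩ : Fin n) := by
          have := i.isLt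
          rw [Fin.le_def]
          simp only []
          omega
        have habs := hmono i ⟨n - 1, by omega⟩ hipos hile
        exact_mod_cast ENNReal.coe_le_coe.mpr (by
          exact_mod_cast habs)
    · have hmemtop : lamTop ∈ spectrum ℂ Dc := by
        rw [aux_mem_spectrum_iff]
        have hmem : lamTop ∈ Dc.charpoly.roots := by
          rw [hrootsD]
          refine Multiset.mem_cons_of_mem (Multiset.mem_map_of_mem _ ?_)
          refine (hnodup.mem_erase_iff).mpr ⟨?_, Finset.mem_univ_val _⟩
          intro h
          have := congrArg Fin.val h
          simp only [] at this
          omega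
        exact ((Polynomial.mem_roots hD0).mp hmem)
      exact le_iSup₂ (f := fun k (_ : k ∈ spectrum ℂ Dc) => (‖k‖₊ : ℝ≥0∞)) lamTop hmemtop
  have gel := spectrum.pow_nnnorm_pow_one_div_tendsto_nhds_spectralRadius Dc
  rw [hrad] at gel
  have hcont := (ENNReal.tendsto_toReal (ENNReal.coe_ne_top)).comp gel
  have heq : (fun k : ℕ => ((‖Dc ^ k‖₊ : ℝ≥0∞) ^ ((1:ℝ)/k)).toReal)
      = fun k : ℕ => ‖Dc ^ k‖ ^ ((1:ℝ)/k) := by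
    funext k
    rw [← ENNReal.toReal_rpow, ENNReal.coe_toReal, coe_nnnorm]
  have : Filter.Tendsto (fun k : ℕ => ‖Dc ^ k‖ ^ ((1:ℝ)/k)) Filter.atTop
      (nhds ((‖lamTop‖₊ : ℝ≥0∞)).toReal) := by
    rw [← heq]
    exact hcont
  simpa using this
end gel

section sandwich
attribute [local instance] Matrix.linftyOpNormedRing Matrix.linftyOpNormedAlgebra

lemma aux_sandwich {n : ℕ} (hn : 2 ≤ n) (B : Matrix (Fin n) (Fin n) ℝ)
    {lam1 : ℝ} (hB : B *ᵥ (1 : Fin n → ℝ) = lam1 • (1 : Fin n → ℝ))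
    (p : ℝ≥0∞) (hp : 1 ≤ p) (hp' : p = ⊤ ∨ ∃ m : ℕ, p = m) {k : ℕ} (hk : 1 ≤ k) :
    (1 / (2 * (n:ℝ)^2)) * ‖((auxP n * B).map ((↑) : ℝ → ℂ)) ^ k‖ ≤ tau p (B ^ k) ∧
      tau p (B ^ k) ≤ (n:ℝ)^2 * ‖((auxP n * B).map ((↑) : ℝ → ℂ)) ^ k‖ := by
  have hnpos : 0 < n := by omega
  have hnR : (0:ℝ) < n := by exact_mod_cast hnpos
  set D := auxP n * B with hD
  set Dc := D.map ((↑) : ℝ → ℂ) with hDc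
  have hpow : Dc ^ k = (D ^ k).map ((↑) : ℝ → ℂ) := by
    have h1 : Dc = (Complex.ofRealHom).mapMatrix D := rfl
    rw [h1, ← map_pow]
    rfl
  -- entry bounds
  have hentry : ∀ i j, |(D ^ k) i j| ≤ ‖Dc ^ k‖ := by
    intro i j
    have h1 : ‖(Dc ^ k) i j‖₊ ≤ ‖Dc ^ k‖₊ := by
      rw [Matrix.linfty_opNNNorm_def]
      calc ‖(Dc ^ k) i j‖₊ ≤ ∑ j', ‖(Dc ^ k) i j'‖₊ :=
            Finset.single_le_sum (f := fun j' => ‖(Dc ^ k) i j'‖₊)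
              (fun _ _ => zero_le) (Finset.mem_univ j)
        _ ≤ _ := Finset.le_sup (f := fun i => ∑ j', ‖(Dc ^ k) i j'‖₊) (Finset.mem_univ i)
    have h2 : ‖(Dc ^ k) i j‖ = |(D ^ k) i j| := by
      rw [hpow]
      simp [Matrix.map_apply]
    calc |(D ^ k) i j| = ‖(Dc ^ k) i j‖ := h2.symm
      _ ≤ ‖Dc ^ k‖ := h1
  have htot : ‖Dc ^ k‖ ≤ ∑ i, ∑ j, |(D ^ k) i j| := by
    have h1 : ‖Dc ^ k‖₊ ≤ ∑ i, ∑ j, ‖(Dc ^ k) i j‖₊ := by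
      rw [Matrix.linfty_opNNNorm_def]
      exact Finset.sup_le fun i _ =>
        Finset.single_le_sum (f := fun i => ∑ j, ‖(Dc ^ k) i j‖₊)
          (fun _ _ => zero_le) (Finset.mem_univ i)
    have h2 := NNReal.coe_le_coe.mpr h1
    rw [NNReal.coe_sum] at h2
    simp only [NNReal.coe_sum] at h2
    calc ‖Dc ^ k‖ = (‖Dc ^ k‖₊ : ℝ) := rfl
      _ ≤ ∑ i, ∑ j, (‖(Dc ^ k) i j‖₊ : ℝ) := h2
      _ = ∑ i, ∑ j, |(D ^ k) i j| := by
          refine Finset.sum_congr rfl fun i _ => Finset.sum_congr rfl fun j _ => ?_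
          rw [coe_nnnorm, hpow]
          simp [Matrix.map_apply]
  -- upper bound on every element of the tau set
  have hub : ∀ t ∈ { t : ℝ | ∃ x : Fin n → ℝ, (∑ i, x i) = 0 ∧ lpNorm p x = 1 ∧
      t = lpNorm p ((B ^ k)ᵀ *ᵥ x) }, t ≤ (n:ℝ)^2 * ‖Dc ^ k‖ := by
    rintro t ⟨x, hxs, hxn, rfl⟩
    have hcoordx : ∀ j, |x j| ≤ 1 := fun j => hxn ▸ aux_lp_coord hp hp' x j
    have hmv : (B ^ k)ᵀ *ᵥ x = (D ^ k)ᵀ *ᵥ x := (auxD_transpose_mulVec hB hnpos hk hxs).symm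
    rw [hmv]
    calc lpNorm p ((D ^ k)ᵀ *ᵥ x) ≤ ∑ i, |((D ^ k)ᵀ *ᵥ x) i| :=
          aux_lp_le_sum hp hp' hnpos _
      _ ≤ ∑ i, ∑ j, |(D ^ k) j i| := by
          refine Finset.sum_le_sum fun i _ => ?_
          calc |((D ^ k)ᵀ *ᵥ x) i| = |∑ j, (D ^ k) j i * x j| := by
                simp [Matrix.mulVec, dotProduct, Matrix.transpose_apply]
            _ ≤ ∑ j, |(D ^ k) j i * x j| := Finset.abs_sum_le_sum_abs _ _
            _ ≤ ∑ j, |(D ^ k) j i| := by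
                refine Finset.sum_le_sum fun j _ => ?_
                rw [abs_mul]
                calc |(D ^ k) j i| * |x j| ≤ |(D ^ k) j i| * 1 :=
                      mul_le_mul_of_nonneg_left (hcoordx j) (abs_nonneg _)
                  _ = |(D ^ k) j i| := mul_one _
      _ ≤ ∑ _i : Fin n, ∑ _j : Fin n, ‖Dc ^ k‖ := by
          exact Finset.sum_le_sum fun i _ => Finset.sum_le_sum fun j _ => hentry j i
      _ = (n:ℝ)^2 * ‖Dc ^ k‖ := by
          simp [Finset.sum_const, Finset.card_univ]
          ring
  have hbdd : BddAbove { t : ℝ | ∃ x : Fin n → ℝ, (∑ i, x i) = 0 ∧ lpNorm p x = 1 ∧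
      t = lpNorm p ((B ^ k)ᵀ *ᵥ x) } := ⟨(n:ℝ)^2 * ‖Dc ^ k‖, hub⟩
  constructor
  · -- lower bound
    obtain ⟨q, _, hqmax⟩ := Finset.exists_max_image (Finset.univ : Finset (Fin n × Fin n))
      (fun q => |(D ^ k) q.1 q.2|) ⟨(⟨0, hnpos⟩, ⟨0, hnpos⟩), Finset.mem_univ _⟩
    set a := q.1 with ha
    set b := q.2 with hb
    set m := |(D ^ k) a b| with hm
    have hm0 : 0 ≤ m := abs_nonneg _
    have hEm : ‖Dc ^ k‖ ≤ (n:ℝ)^2 * m := by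
      calc ‖Dc ^ k‖ ≤ ∑ i, ∑ j, |(D ^ k) i j| := htot
        _ ≤ ∑ _i : Fin n, ∑ _j : Fin n, m :=
            Finset.sum_le_sum fun i _ => Finset.sum_le_sum fun j _ =>
              hqmax (i, j) (Finset.mem_univ _)
        _ = (n:ℝ)^2 * m := by
            simp [Finset.sum_const, Finset.card_univ]
            ring
    set x : Fin n → ℝ := fun i => (if i = a then (1:ℝ) else 0) - (n:ℝ)⁻¹ with hx
    have hxsum : ∑ i, x i = 0 := by
      simp [hx, Finset.sum_sub_distrib, Finset.sum_ite_eq', Finset.card_univ]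
      field_simp
      norm_num
    have hxa : |x a| = 1 - (n:ℝ)⁻¹ := by
      have h1 : (n:ℝ)⁻¹ ≤ 1 := by
        rw [inv_le_one_iff₀]; right; exact_mod_cast hnpos
      have h2 : x a = 1 - (n:ℝ)⁻¹ := by simp [hx]
      rw [h2, abs_of_nonneg (by linarith)]
    have hxpos : 0 < lpNorm p x := by
      have h2 : (n:ℝ)⁻¹ < 1 := by
        rw [inv_lt_one_iff₀]; right; exact_mod_cast hn
      have := aux_lp_coord hp hp' x a
      rw [hxa] at this
      linarith
    have hxle : lpNorm p x ≤ 2 := by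
      calc lpNorm p x ≤ ∑ i, |x i| := aux_lp_le_sum hp hp' hnpos x
        _ ≤ ∑ i, ((if i = a then (1:ℝ) else 0) + (n:ℝ)⁻¹) := by
            refine Finset.sum_le_sum fun i _ => ?_
            calc |x i| ≤ |if i = a then (1:ℝ) else 0| + |(n:ℝ)⁻¹| := abs_sub _ _
              _ = (if i = a then (1:ℝ) else 0) + (n:ℝ)⁻¹ := by
                  congr 1
                  · split <;> simp
                  · rw [abs_of_nonneg]; positivity
        _ = 2 := by
            rw [Finset.sum_add_distrib]
            simp [Finset.sum_ite_eq', Finset.card_univ]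
            rw [mul_inv_cancel₀ (ne_of_gt hnR)]
            norm_num
    set c : ℝ := (lpNorm p x)⁻¹ with hc
    have hcpos : 0 < c := inv_pos.mpr hxpos
    have hchalf : 1/2 ≤ c := by
      rw [hc, one_div]
      exact inv_anti₀ hxpos hxle
    set xh : Fin n → ℝ := c • x with hxh
    have hxhsum : ∑ i, xh i = 0 := by
      simp [hxh, ← Finset.mul_sum, hxsum]
    have hxhnorm : lpNorm p xh = 1 := by
      rw [hxh, aux_lp_smul hp, abs_of_pos hcpos, hc, inv_mul_cancel₀ (ne_of_gt hxpos)]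
    have hcoordb : ((D ^ k)ᵀ *ᵥ x) b = (D ^ k) a b := by
      have hcols : ∑ j, (D ^ k) j b = 0 := by
        have := congrFun (auxD_vecMul_one hB hnpos hk) b
        simpa [Matrix.vecMul, dotProduct] using this
      have : ((D ^ k)ᵀ *ᵥ x) b = ∑ j, (D ^ k) j b * x j := by
        simp [Matrix.mulVec, dotProduct, Matrix.transpose_apply]
      rw [this]
      simp only [hx, mul_sub, Finset.sum_sub_distrib]
      rw [← Finset.sum_mul, hcols]
      simp [mul_ite, mul_one, mul_zero, Finset.sum_ite_eq' Finset.univ a (fun j => (D ^ k) j b)]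
    have hmemS : lpNorm p ((B ^ k)ᵀ *ᵥ xh) ∈ { t : ℝ | ∃ x : Fin n → ℝ, (∑ i, x i) = 0 ∧
        lpNorm p x = 1 ∧ t = lpNorm p ((B ^ k)ᵀ *ᵥ x) } := ⟨xh, hxhsum, hxhnorm, rfl⟩
    have htau_ge : lpNorm p ((B ^ k)ᵀ *ᵥ xh) ≤ tau p (B ^ k) := le_csSup hbdd hmemS
    have hval : (1/2) * m ≤ lpNorm p ((B ^ k)ᵀ *ᵥ xh) := by
      have hmv : (B ^ k)ᵀ *ᵥ xh = c • ((B ^ k)ᵀ *ᵥ x) := Matrix.mulVec_smul _ _ _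
      rw [hmv, aux_lp_smul hp, abs_of_pos hcpos]
      have hmvx : (B ^ k)ᵀ *ᵥ x = (D ^ k)ᵀ *ᵥ x := (auxD_transpose_mulVec hB hnpos hk hxsum).symm
      rw [hmvx]
      have h1 : m ≤ lpNorm p ((D ^ k)ᵀ *ᵥ x) := by
        have := aux_lp_coord hp hp' ((D ^ k)ᵀ *ᵥ x) b
        rw [hcoordb] at this
        exact this
      calc (1/2) * m ≤ c * m := by
            apply mul_le_mul_of_nonneg_right hchalf hm0
        _ ≤ c * lpNorm p ((D ^ k)ᵀ *ᵥ x) := mul_le_mul_of_nonneg_left h1 (le_of_lt hcpos)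
    calc (1 / (2 * (n:ℝ)^2)) * ‖Dc ^ k‖ ≤ (1 / (2 * (n:ℝ)^2)) * ((n:ℝ)^2 * m) := by
          apply mul_le_mul_of_nonneg_left hEm; positivity
      _ = (1/2) * m := by field_simp
      _ ≤ lpNorm p ((B ^ k)ᵀ *ᵥ xh) := hval
      _ ≤ tau p (B ^ k) := htau_ge
  · -- upper bound
    exact Real.sSup_le hub (by positivity)
end sandwich


lemma aux_rpow_tendsto_one {c : ℝ} (hc : 0 < c) :
    Tendsto (fun k : ℕ => c ^ ((1:ℝ)/k)) atTop (𝓝 1) := by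
  have h0 : Tendsto (fun k : ℕ => ((1:ℝ)/k)) atTop (𝓝 0) :=
    tendsto_one_div_atTop_nhds_zero_nat
  have hfun : (fun k : ℕ => c ^ ((1:ℝ)/k))
      = (fun y : ℝ => Real.exp (Real.log c * y)) ∘ (fun k : ℕ => ((1:ℝ)/k)) := by
    funext k
    simp [Function.comp, Real.rpow_def_of_pos hc]
  rw [hfun]
  have hcont : Tendsto (fun y : ℝ => Real.exp (Real.log c * y)) (𝓝 0) (𝓝 1) := by
    have hcont2 : Continuous (fun y : ℝ => Real.exp (Real.log c * y)) :=
      Real.continuous_exp.comp (continuous_const.mul continuous_id)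
    have := hcont2.tendsto 0
    simpa using this
  exact hcont.comp h0


section wrap
attribute [local instance] Matrix.linftyOpNormedRing Matrix.linftyOpNormedAlgebra

noncomputable def auxMnorm {n : ℕ} (B : Matrix (Fin n) (Fin n) ℝ) (k : ℕ) : ℝ :=
  ‖((auxP n * B).map ((↑) : ℝ → ℂ)) ^ k‖

lemma aux_gelfand' {n : ℕ} (hn : 2 ≤ n) (B : Matrix (Fin n) (Fin n) ℝ)
    (lam : Fin n → ℂ)
    (hroots : ((B.map ((↑) : ℝ → ℂ)).charpoly).roots = Finset.univ.val.map lam)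
    (lam1 : ℝ) (hB : B *ᵥ (1 : Fin n → ℝ) = lam1 • (1 : Fin n → ℝ))
    (hlam1 : lam ⟨0, by linarith⟩ = (lam1 : ℂ))
    (hmono : ∀ i j : Fin n, 0 < i.val → i ≤ j →
      ‖lam i‖ ≤ ‖lam j‖) :
    Filter.Tendsto (fun k : ℕ => (auxMnorm B k) ^ ((1:ℝ)/k))
      Filter.atTop (nhds (‖lam ⟨n - 1, Nat.sub_lt (by linarith) Nat.one_pos⟩‖)) :=
  aux_gelfand hn B lam hroots lam1 hB hlam1 hmono

lemma aux_sandwich' {n : ℕ} (hn : 2 ≤ n) (B : Matrix (Fin n) (Fin n) ℝ)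
    {lam1 : ℝ} (hB : B *ᵥ (1 : Fin n → ℝ) = lam1 • (1 : Fin n → ℝ))
    (p : ℝ≥0∞) (hp : 1 ≤ p) (hp' : p = ⊤ ∨ ∃ m : ℕ, p = m) {k : ℕ} (hk : 1 ≤ k) :
    (1 / (2 * (n:ℝ)^2)) * auxMnorm B k ≤ tau p (B ^ k) ∧
      tau p (B ^ k) ≤ (n:ℝ)^2 * auxMnorm B k :=
  aux_sandwich hn B hB p hp hp' hk

lemma auxMnorm_nonneg {n : ℕ} (B : Matrix (Fin n) (Fin n) ℝ) (k : ℕ) :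
    0 ≤ auxMnorm B k := norm_nonneg _
end wrap

/-- equation (15): for a constant row-sum matrix `B` with eigenvalues
`λ₁, …, λ_n` (with `B e = λ₁ e` and `|λ₂| ≤ ⋯ ≤ |λ_n|`),
`lim_{k→∞} (τ_p(B^k))^{1/k} = |λ_n|`. -/
theorem stmt16 {n : ℕ} (hn : 2 ≤ n) (B : Matrix (Fin n) (Fin n) ℝ)
    (lam : Fin n → ℂ)
    (hroots : ((B.map ((↑) : ℝ → ℂ)).charpoly).roots = Finset.univ.val.map lam)
    (lam1 : ℝ) (hB : B *ᵥ (1 : Fin n → ℝ) = lam1 • (1 : Fin n → ℝ))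
    (hlam1 : lam ⟨0, by omega⟩ = (lam1 : ℂ))
    (hmono : ∀ i j : Fin n, 0 < i.val → i ≤ j →
      ‖lam i‖ ≤ ‖lam j‖)
    (p : ℝ≥0∞) (hp : 1 ≤ p) (hp' : p = ⊤ ∨ ∃ m : ℕ, p = m) :
    Filter.Tendsto (fun k : ℕ => (tau p (B ^ k)) ^ ((1 : ℝ) / k)) Filter.atTop
      (nhds (‖lam ⟨n - 1, by omega⟩‖)) := by
  have hnpos : 0 < n := by omega
  have hgel := aux_gelfand' hn B lam hroots lam1 hB hlam1 hmono
  set r := ‖lam ⟨n - 1, by omega⟩‖ with hr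
  set M : ℕ → ℝ := fun k => auxMnorm B k with hM
  have hc1 : (0:ℝ) < 1 / (2 * (n:ℝ)^2) := by positivity
  have hc2 : (0:ℝ) < (n:ℝ)^2 := by positivity
  have hl : Filter.Tendsto (fun k : ℕ => (1 / (2 * (n:ℝ)^2)) ^ ((1:ℝ)/k) * (M k ^ ((1:ℝ)/k)))
      Filter.atTop (nhds ((1:ℝ) * r)) := (aux_rpow_tendsto_one hc1).mul hgel
  have hu : Filter.Tendsto (fun k : ℕ => ((n:ℝ)^2) ^ ((1:ℝ)/k) * (M k ^ ((1:ℝ)/k)))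
      Filter.atTop (nhds ((1:ℝ) * r)) := (aux_rpow_tendsto_one hc2).mul hgel
  rw [one_mul] at hl hu
  refine tendsto_of_tendsto_of_tendsto_of_le_of_le' hl hu ?_ ?_
  · filter_upwards [Filter.eventually_ge_atTop 1] with k hk
    have hs := (aux_sandwich' hn B hB p hp hp' hk).1
    have hMn : 0 ≤ M k := auxMnorm_nonneg B k
    calc (1 / (2 * (n:ℝ)^2)) ^ ((1:ℝ)/k) * (M k ^ ((1:ℝ)/k))
        = ((1 / (2 * (n:ℝ)^2)) * M k) ^ ((1:ℝ)/k) := (Real.mul_rpow hc1.le hMn).symm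
      _ ≤ (tau p (B ^ k)) ^ ((1:ℝ)/k) :=
          Real.rpow_le_rpow (by positivity) hs (by positivity)
  · filter_upwards [Filter.eventually_ge_atTop 1] with k hk
    have hsand := aux_sandwich' hn B hB p hp hp' hk
    have hMn : 0 ≤ M k := auxMnorm_nonneg B k
    have htau0 : 0 ≤ tau p (B ^ k) := le_trans (by positivity) hsand.1
    calc (tau p (B ^ k)) ^ ((1:ℝ)/k)
        ≤ (((n:ℝ)^2) * M k) ^ ((1:ℝ)/k) :=
          Real.rpow_le_rpow htau0 hsand.2 (by positivity)
      _ = ((n:ℝ)^2) ^ ((1:ℝ)/k) * (M k ^ ((1:ℝ)/k)) := Real.mul_rpow hc2.le hMn
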